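/- Define h_ℓ = (−1)^ℓ binom(−1/2, ℓ) / log(max(ℓ,2)) for ℓ ∈ ℕ. Then: (i) Σ_{ℓ≥0} h_ℓ² < ∞; and (ii) for every ν ≥ 0 there exist constants A, B > 0 (depending only on ν) such that for all ℓ ∈ ℕ, with c_ℓ = Σ_{k=0}^{ℓ} (−1)^k binom(−ν, k) · h_{ℓ−k} (the ℓ-th coefficient of the product of the power series (1−z)^{−ν} and Σ h_m z^m, up to the sign (−1)^ℓ), one has A · (max(ℓ,1))^{ν−1/2} / log(max(ℓ,2)) ≤ |c_ℓ| ≤ B · (max(ℓ,1))^{ν−1/2}. -/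

import Mathlib

/-- The generalized binomial coefficient `binom(x, k) = (∏_{j=0}^{k−1} (x − j)) / k!`. -/
noncomputable def genBinom (x : ℝ) (k : ℕ) : ℝ :=
  (∏ j ∈ Finset.range k, (x - j)) / (k.factorial)

/-- The sequence `h_ℓ = (−1)^ℓ binom(−1/2, ℓ) / log(max(ℓ,2))`. -/
noncomputable def hSeq (ℓ : ℕ) : ℝ :=
  (-1 : ℝ) ^ ℓ * genBinom (-(1 / 2)) ℓ / Real.log ((max ℓ 2 : ℕ) : ℝ)

noncomputable def bSeq (ν : ℝ) (k : ℕ) : ℝ :=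
  (∏ j ∈ Finset.range k, (ν + j)) / (k.factorial)

lemma bSeq_zero (ν : ℝ) : bSeq ν 0 = 1 := by simp [bSeq]

lemma bSeq_succ (ν : ℝ) (k : ℕ) :
    bSeq ν (k + 1) = bSeq ν k * (ν + k) / (k + 1) := by
  have h : (k.factorial : ℝ) ≠ 0 := Nat.cast_ne_zero.2 k.factorial_ne_zero
  simp only [bSeq, Finset.prod_range_succ, Nat.factorial_succ, Nat.cast_mul, Nat.cast_add,
    Nat.cast_one, div_mul_eq_mul_div, div_div]
  rw [mul_comm ((k:ℝ)+1)]

lemma bSeq_eq (ν : ℝ) (k : ℕ) : (-1 : ℝ) ^ k * genBinom (-ν) k = bSeq ν k := by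
  have h1 : ((-1:ℝ))^k = ∏ _j ∈ Finset.range k, (-1:ℝ) := by simp
  have h2 : ∏ j ∈ Finset.range k, ((-1:ℝ) * (-ν - j)) = ∏ j ∈ Finset.range k, (ν + j) :=
    Finset.prod_congr rfl fun j _ => by ring
  simp only [genBinom, bSeq, h1, mul_div_assoc', ← Finset.prod_mul_distrib, h2]

lemma bSeq_pos {ν : ℝ} (hν : 0 < ν) (k : ℕ) : 0 < bSeq ν k := by
  apply div_pos
  · exact Finset.prod_pos fun j _ => by positivity
  · positivity

lemma bSeq_nonneg {ν : ℝ} (hν : 0 ≤ ν) (k : ℕ) : 0 ≤ bSeq ν k := by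
  apply div_nonneg
  · exact Finset.prod_nonneg fun j _ => by positivity
  · positivity

lemma bSeq_vandermonde (x y : ℝ) (ℓ : ℕ) :
    ∑ k ∈ Finset.range (ℓ + 1), bSeq x k * bSeq y (ℓ - k) = bSeq (x + y) ℓ := by
  induction ℓ with
  | zero => simp [bSeq_zero]
  | succ n ih =>
    have hne : ((n : ℝ) + 1) ≠ 0 := by positivity
    have hmul : ∀ (z : ℝ) (m : ℕ), ((m : ℝ) + 1) * bSeq z (m + 1) = (z + m) * bSeq z m := by
      intro z m
      rw [bSeq_succ]
      field_simp
    set S := ∑ k ∈ Finset.range (n + 2), bSeq x k * bSeq y (n + 1 - k) with hS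
    have claim1 : ∑ k ∈ Finset.range (n + 2), (k : ℝ) * (bSeq x k * bSeq y (n + 1 - k))
        = ∑ k ∈ Finset.range (n + 1), ((x + k) * bSeq x k) * bSeq y (n - k) := by
      rw [Finset.sum_range_succ']
      simp only [Nat.cast_zero, zero_mul, add_zero, Nat.cast_add, Nat.cast_one,
        Nat.succ_sub_succ]
      refine Finset.sum_congr rfl fun k _ => ?_
      rw [← mul_assoc, hmul x k]
    have claim2 : ∑ k ∈ Finset.range (n + 2), ((n + 1 - k : ℕ) : ℝ) * (bSeq x k * bSeq y (n + 1 - k))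
        = ∑ k ∈ Finset.range (n + 1), bSeq x k * ((y + (n - k : ℕ)) * bSeq y (n - k)) := by
      rw [Finset.sum_range_succ]
      simp only [Nat.sub_self, Nat.cast_zero, zero_mul, add_zero]
      refine Finset.sum_congr rfl fun k hk => ?_
      have hk' : k ≤ n := Nat.lt_succ_iff.mp (Finset.mem_range.mp hk)
      have h1 : n + 1 - k = (n - k) + 1 := by omega
      rw [h1]
      push_cast
      rw [show (((n - k : ℕ) : ℝ) + 1) * (bSeq x k * bSeq y ((n - k) + 1))
            = bSeq x k * ((((n - k : ℕ) : ℝ) + 1) * bSeq y ((n - k) + 1)) by ring,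
        hmul y (n - k)]
    have claim3 : ((n : ℝ) + 1) * S
        = ∑ k ∈ Finset.range (n + 1), ((x + k) * bSeq x k) * bSeq y (n - k)
          + ∑ k ∈ Finset.range (n + 1), bSeq x k * ((y + (n - k : ℕ)) * bSeq y (n - k)) := by
      rw [← claim1, ← claim2, ← Finset.sum_add_distrib, hS, Finset.mul_sum]
      refine Finset.sum_congr rfl fun k hk => ?_
      have hk' : k ≤ n + 1 := Nat.lt_succ_iff.mp (Finset.mem_range.mp hk)
      have : ((n + 1 - k : ℕ) : ℝ) = (n : ℝ) + 1 - k := by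
        rw [Nat.cast_sub hk']; push_cast; ring
      rw [this]
      ring
    have claim4 : ((n : ℝ) + 1) * S = (x + y + n) * bSeq (x + y) n := by
      rw [claim3, ← ih, Finset.mul_sum, ← Finset.sum_add_distrib]
      refine Finset.sum_congr rfl fun k hk => ?_
      have hk' : k ≤ n := Nat.lt_succ_iff.mp (Finset.mem_range.mp hk)
      have : ((n - k : ℕ) : ℝ) = (n : ℝ) - k := by
        rw [Nat.cast_sub hk']
      rw [this]
      ring
    have claim5 : ((n : ℝ) + 1) * bSeq (x + y) (n + 1) = (x + y + n) * bSeq (x + y) n :=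
      hmul (x + y) n
    exact mul_left_cancel₀ hne (claim4.trans claim5.symm)

lemma sq_sum_le (ℓ : ℕ) : ∑ j ∈ Finset.range ℓ, (1 / ((j : ℝ) + 1)) ^ 2 ≤ 2 := by
  have key : ∀ m : ℕ, ∑ j ∈ Finset.range (m+1), (1 / ((j : ℝ) + 1)) ^ 2 ≤ 2 - 1 / ((m : ℝ) + 1) := by
    intro m
    induction m with
    | zero => norm_num
    | succ n ih =>
      rw [Finset.sum_range_succ]
      have h1 : (0:ℝ) < (n:ℝ) + 1 := by positivity
      have h2 : (0:ℝ) < (n:ℝ) + 2 := by positivity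
      have hstep : (1 / ((n : ℝ) + 1 + 1)) ^ 2 ≤ 1 / ((n:ℝ)+1) - 1 / ((n:ℝ)+2) := by
        rw [div_sub_div _ _ (ne_of_gt h1) (ne_of_gt h2), div_pow, one_pow,
          div_le_div_iff₀ (by positivity) (by positivity)]
        nlinarith
      push_cast
      push_cast at ih hstep
      have e : ((n:ℝ)+1+1) = (n:ℝ)+2 := by ring
      rw [e] at hstep ⊢
      linarith
  match ℓ with
  | 0 => norm_num
  | m + 1 =>
    have h0 : (0:ℝ) ≤ 1 / ((m:ℝ) + 1) := by positivity
    linarith [key m]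

lemma log_one_add_bounds {x : ℝ} (hx : -(1/2) ≤ x) :
    x - 2 * x ^ 2 ≤ Real.log (1 + x) ∧ Real.log (1 + x) ≤ x := by
  have h1 : (0:ℝ) < 1 + x := by linarith
  constructor
  · have h2 := Real.one_sub_inv_le_log_of_pos h1
    have hinv : (1 + x) * (1 + x)⁻¹ = 1 := mul_inv_cancel₀ (ne_of_gt h1)
    have h3 : x - 2 * x ^ 2 ≤ 1 - (1 + x)⁻¹ := by nlinarith [sq_nonneg x, inv_nonneg.mpr h1.le]
    linarith
  · have := Real.log_le_sub_one_of_pos h1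
    linarith

lemma bSeq_prod (ν : ℝ) (k : ℕ) : bSeq ν k = ∏ j ∈ Finset.range k, ((ν + j) / (j + 1)) := by
  rw [bSeq, Finset.prod_div_distrib, ← Finset.prod_range_add_one_eq_factorial k, Nat.cast_prod]
  push_cast
  rfl

lemma bSeq_log_bound {μ : ℝ} (hμ : 1/2 ≤ μ) {ℓ : ℕ} (hℓ : 1 ≤ ℓ) :
    |Real.log (bSeq μ ℓ) - (μ - 1) * Real.log ℓ| ≤ 4 * (μ - 1) ^ 2 + |μ - 1| := by
  set t := μ - 1 with ht
  have ht2 : -(1/2) ≤ t := by rw [ht]; linarith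
  have hfac : ∀ j : ℕ, (μ + j) / ((j : ℝ) + 1) = 1 + t / ((j : ℝ) + 1) := by
    intro j
    have hj : ((j : ℝ) + 1) ≠ 0 := by positivity
    field_simp
    ring
  have hxj : ∀ j : ℕ, -(1/2) ≤ t / ((j : ℝ) + 1) := by
    intro j
    have hj : (0:ℝ) < (j : ℝ) + 1 := by positivity
    rw [le_div_iff₀ hj]
    nlinarith [Nat.cast_nonneg (α := ℝ) j]
  have hfpos : ∀ j : ℕ, (0:ℝ) < 1 + t / ((j : ℝ) + 1) := by
    intro j
    have := hxj j
    linarith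
  have hlog : Real.log (bSeq μ ℓ) = ∑ j ∈ Finset.range ℓ, Real.log (1 + t / ((j : ℝ) + 1)) := by
    rw [bSeq_prod]
    rw [Real.log_prod (s := Finset.range ℓ) (f := fun j : ℕ => (μ + j) / ((j:ℝ) + 1)) (fun j _ => by rw [hfac j]; exact ne_of_gt (hfpos j))]
    exact Finset.sum_congr rfl fun j _ => by rw [hfac j]
  set H : ℝ := ∑ j ∈ Finset.range ℓ, 1 / ((j : ℝ) + 1) with hH
  have step1 : |Real.log (bSeq μ ℓ) - t * H| ≤ 4 * t ^ 2 := by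
    rw [hlog, hH, Finset.mul_sum, ← Finset.sum_sub_distrib]
    calc |∑ j ∈ Finset.range ℓ, (Real.log (1 + t / ((j : ℝ) + 1)) - t * (1 / ((j : ℝ) + 1)))|
        ≤ ∑ j ∈ Finset.range ℓ, |Real.log (1 + t / ((j : ℝ) + 1)) - t * (1 / ((j : ℝ) + 1))| :=
          Finset.abs_sum_le_sum_abs _ _
      _ ≤ ∑ j ∈ Finset.range ℓ, 2 * t ^ 2 * (1 / ((j : ℝ) + 1)) ^ 2 := by
          refine Finset.sum_le_sum fun j _ => ?_
          obtain ⟨hlo, hhi⟩ := log_one_add_bounds (hxj j)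
          rw [abs_le]
          constructor
          · have : t * (1 / ((j : ℝ) + 1)) = t / ((j:ℝ)+1) := by ring
            rw [this]
            have h2 : 2 * (t / ((j:ℝ)+1)) ^ 2 = 2 * t ^ 2 * (1 / ((j : ℝ) + 1)) ^ 2 := by ring
            linarith [hlo, h2.le, h2.ge]
          · have : t * (1 / ((j : ℝ) + 1)) = t / ((j:ℝ)+1) := by ring
            rw [this]
            nlinarith [hhi, sq_nonneg (t / ((j:ℝ)+1)), sq_nonneg (1 / ((j:ℝ)+1)), sq_nonneg t]
      _ = 2 * t ^ 2 * ∑ j ∈ Finset.range ℓ, (1 / ((j : ℝ) + 1)) ^ 2 := by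
          rw [Finset.mul_sum]
      _ ≤ 2 * t ^ 2 * 2 := by
          have := sq_sum_le ℓ
          nlinarith [sq_nonneg t]
      _ = 4 * t ^ 2 := by ring
  have hHh : H = ((harmonic ℓ : ℚ) : ℝ) := by
    rw [hH, harmonic]
    push_cast
    exact Finset.sum_congr rfl fun j _ => by rw [one_div]
  have hHlb : Real.log ℓ ≤ H := by
    rw [hHh]
    calc Real.log ℓ ≤ Real.log ((ℓ : ℝ) + 1) := by
          apply Real.log_le_log (by exact_mod_cast hℓ)
          linarith
      _ ≤ _ := by exact_mod_cast log_add_one_le_harmonic ℓ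
  have hHub : H ≤ 1 + Real.log ℓ := by
    rw [hHh]
    exact_mod_cast harmonic_le_one_add_log ℓ
  have step2 : |t * H - t * Real.log ℓ| ≤ |t| := by
    rw [← mul_sub, abs_mul]
    have : |H - Real.log ℓ| ≤ 1 := by rw [abs_le]; constructor <;> linarith
    calc |t| * |H - Real.log ℓ| ≤ |t| * 1 := by
          exact mul_le_mul_of_nonneg_left this (abs_nonneg t)
      _ = |t| := mul_one _
  calc |Real.log (bSeq μ ℓ) - t * Real.log ℓ|
      ≤ |Real.log (bSeq μ ℓ) - t * H| + |t * H - t * Real.log ℓ| := abs_sub_le _ _ _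
    _ ≤ 4 * t ^ 2 + |t| := add_le_add step1 step2

lemma bSeq_asymp {μ : ℝ} (hμ : 1/2 ≤ μ) :
    ∀ ℓ : ℕ, 1 ≤ ℓ →
      Real.exp (-(4 * (μ - 1) ^ 2 + |μ - 1|)) * (ℓ : ℝ) ^ (μ - 1) ≤ bSeq μ ℓ ∧
      bSeq μ ℓ ≤ Real.exp (4 * (μ - 1) ^ 2 + |μ - 1|) * (ℓ : ℝ) ^ (μ - 1) := by
  intro ℓ hℓ
  have hμ0 : (0:ℝ) < μ := by linarith
  have hlpos : (0:ℝ) < (ℓ : ℝ) := by exact_mod_cast Nat.lt_of_lt_of_le Nat.zero_lt_one hℓ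
  have hb : 0 < bSeq μ ℓ := bSeq_pos hμ0 ℓ
  have habs := bSeq_log_bound hμ hℓ
  rw [abs_le] at habs
  have hrpow : (ℓ : ℝ) ^ (μ - 1) = Real.exp ((μ - 1) * Real.log ℓ) := by
    rw [Real.rpow_def_of_pos hlpos, mul_comm]
  constructor
  · rw [hrpow, ← Real.exp_add, ← Real.exp_log hb]
    exact Real.exp_le_exp.mpr (by linarith [habs.1])
  · rw [hrpow, ← Real.exp_add, ← Real.exp_log hb]
    exact Real.exp_le_exp.mpr (by linarith [habs.2])

lemma hSeq_eq (m : ℕ) : hSeq m = bSeq (1/2) m / Real.log ((max m 2 : ℕ) : ℝ) := by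
  rw [hSeq, ← bSeq_eq]

lemma log_max_pos (m : ℕ) : 0 < Real.log ((max m 2 : ℕ) : ℝ) := by
  apply Real.log_pos
  have : (2 : ℕ) ≤ max m 2 := le_max_right _ _
  exact_mod_cast Nat.lt_of_lt_of_le Nat.one_lt_two this

lemma log_two_le_log_max (m : ℕ) : Real.log 2 ≤ Real.log ((max m 2 : ℕ) : ℝ) := by
  apply Real.log_le_log (by norm_num)
  have : (2 : ℕ) ≤ max m 2 := le_max_right _ _
  exact_mod_cast this

lemma summable_aux :
    Summable (fun n : ℕ => 1 / (((n : ℝ) + 2) * (Real.log ((n : ℝ) + 2)) ^ 2)) := by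
  set F : ℕ → ℝ := fun n => 1 / (((n : ℝ) + 2) * (Real.log ((n : ℝ) + 2)) ^ 2) with hF
  have hlogpos : ∀ n : ℕ, 0 < Real.log ((n : ℝ) + 2) := by
    intro n
    apply Real.log_pos
    have : (0:ℝ) ≤ (n:ℝ) := Nat.cast_nonneg n
    linarith
  have hFpos : ∀ n, 0 < F n := by
    intro n
    apply div_pos one_pos
    have := hlogpos n
    positivity
  have hmono : ∀ ⦃m n : ℕ⦄, 0 < m → m ≤ n → F n ≤ F m := by
    intro m n _ hmn
    apply div_le_div_of_nonneg_left one_pos.le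
    · have := hlogpos m; positivity
    · have hc : ((m:ℝ)) ≤ (n:ℝ) := Nat.cast_le.mpr hmn
      have hl : Real.log ((m:ℝ) + 2) ≤ Real.log ((n:ℝ) + 2) := by
        apply Real.log_le_log (by positivity)
        linarith
      have hsq : Real.log ((m:ℝ) + 2) ^ 2 ≤ Real.log ((n:ℝ) + 2) ^ 2 :=
        pow_le_pow_left₀ (hlogpos m).le hl 2
      exact mul_le_mul (by linarith) hsq (by positivity) (by positivity)
  rw [← summable_condensed_iff_of_nonneg (fun n => (hFpos n).le) hmono]
  rw [← summable_nat_add_iff 1]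
  have hlog2 : (0:ℝ) < Real.log 2 := Real.log_pos (by norm_num)
  apply Summable.of_nonneg_of_le (f := fun n : ℕ => (1 / (Real.log 2) ^ 2) * (1 / ((n:ℝ) + 1) ^ 2))
  · intro n
    exact mul_nonneg (by positivity) (hFpos _).le
  · intro n
    have h2pow : (0:ℝ) < (2:ℝ) ^ (n + 1) := by positivity
    have hcast : ((2 ^ (n + 1) : ℕ) : ℝ) = (2:ℝ) ^ (n + 1) := by push_cast; ring
    have hlogge : ((n:ℝ) + 1) * Real.log 2 ≤ Real.log ((2:ℝ) ^ (n + 1) + 2) := by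
      rw [← Real.log_rpow (by norm_num) ((n:ℝ)+1)]
      apply Real.log_le_log (by positivity)
      rw [show ((n:ℝ)+1) = ((n+1 : ℕ) : ℝ) by push_cast; ring, Real.rpow_natCast]
      linarith
    have hlogge0 : (0:ℝ) ≤ ((n:ℝ) + 1) * Real.log 2 := by positivity
    calc (2:ℝ) ^ (n+1) * F (2 ^ (n + 1))
        = (2:ℝ) ^ (n+1) / ((((2 ^ (n+1) : ℕ):ℝ) + 2) * (Real.log (((2 ^ (n+1) : ℕ):ℝ) + 2)) ^ 2) := by
          rw [hF]; ring
      _ ≤ (2:ℝ) ^ (n+1) / (((2:ℝ) ^ (n+1)) * (((n:ℝ) + 1) * Real.log 2) ^ 2) := by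
          rw [hcast]
          apply div_le_div_of_nonneg_left (by positivity) (by positivity)
          apply mul_le_mul (by linarith) ?_ (by positivity) (by positivity)
          apply pow_le_pow_left₀ hlogge0 hlogge
      _ = (1 / (Real.log 2) ^ 2) * (1 / ((n:ℝ) + 1) ^ 2) := by
          field_simp
  · apply Summable.mul_left
    exact_mod_cast (summable_nat_add_iff 1).mpr (Real.summable_one_div_nat_pow.mpr one_lt_two)

lemma part_one : Summable (fun ℓ : ℕ => (hSeq ℓ) ^ 2) := by
  rw [← summable_nat_add_iff 2]
  set C := Real.exp (4 * ((1/2:ℝ) - 1) ^ 2 + |(1/2:ℝ) - 1|) with hC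
  have hCpos : 0 < C := Real.exp_pos _
  apply Summable.of_nonneg_of_le
    (f := fun n : ℕ => C ^ 2 * (1 / (((n : ℝ) + 2) * (Real.log ((n : ℝ) + 2)) ^ 2)))
  · intro n; positivity
  · intro n
    have hub := (bSeq_asymp (le_refl (1/2 : ℝ)) (n + 2) (by omega)).2
    have hlb : 0 < bSeq (1/2 : ℝ) (n + 2) := bSeq_pos (by norm_num) _
    have hx : (0:ℝ) < ((n + 2 : ℕ) : ℝ) := by positivity
    have hxx : ((n + 2 : ℕ) : ℝ) = (n : ℝ) + 2 := by push_cast; ring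
    have hmax : ((max (n + 2) 2 : ℕ) : ℝ) = (n : ℝ) + 2 := by
      rw [max_eq_left (by omega)]; push_cast; ring
    have hsq : (((n + 2 : ℕ) : ℝ) ^ ((1/2 : ℝ) - 1)) ^ 2 = 1 / ((n : ℝ) + 2) := by
      rw [← Real.rpow_natCast (((n + 2 : ℕ) : ℝ) ^ ((1/2 : ℝ) - 1)) 2, ← Real.rpow_mul hx.le]
      norm_num
      exact Real.rpow_neg_one _
    have hlog : 0 < Real.log ((n:ℝ) + 2) := by
      apply Real.log_pos; have : (0:ℝ) ≤ (n:ℝ) := Nat.cast_nonneg n; linarith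
    have hb2 : bSeq (1/2 : ℝ) (n + 2) ^ 2 ≤ C ^ 2 * (1 / ((n : ℝ) + 2)) := by
      rw [← hsq, ← mul_pow]
      exact pow_le_pow_left₀ hlb.le hub 2
    rw [hSeq_eq, div_pow, hmax]
    rw [div_le_iff₀ (by positivity)]
    calc bSeq (1/2 : ℝ) (n+2) ^ 2 ≤ C ^ 2 * (1 / ((n : ℝ) + 2)) := hb2
      _ = C ^ 2 * (1 / (((n : ℝ) + 2) * (Real.log ((n : ℝ) + 2)) ^ 2)) * Real.log ((n:ℝ) + 2) ^ 2 := by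
          field_simp
  · exact Summable.mul_left _ summable_aux

lemma part_two (ν : ℝ) (hν : 0 ≤ ν) : ∃ A B : ℝ, 0 < A ∧ 0 < B ∧ ∀ ℓ : ℕ,
    A * ((max ℓ 1 : ℕ) : ℝ) ^ (ν - 1 / 2) / Real.log ((max ℓ 2 : ℕ) : ℝ)
        ≤ |∑ k ∈ Finset.range (ℓ + 1), (-1 : ℝ) ^ k * genBinom (-ν) k * hSeq (ℓ - k)| ∧
    |∑ k ∈ Finset.range (ℓ + 1), (-1 : ℝ) ^ k * genBinom (-ν) k * hSeq (ℓ - k)|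
        ≤ B * ((max ℓ 1 : ℕ) : ℝ) ^ (ν - 1 / 2) := by
  have hμ : (1/2 : ℝ) ≤ ν + 1/2 := by linarith
  set K : ℝ := 4 * (ν + 1/2 - 1) ^ 2 + |ν + 1/2 - 1| with hK
  have hK0 : 0 ≤ K := by positivity
  have hlog2 : (0:ℝ) < Real.log 2 := Real.log_pos (by norm_num)
  refine ⟨Real.exp (-K), Real.exp K / Real.log 2, Real.exp_pos _, by positivity, fun ℓ => ?_⟩
  have hterm : ∀ k : ℕ, (-1 : ℝ) ^ k * genBinom (-ν) k * hSeq (ℓ - k)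
      = bSeq ν k * bSeq (1/2) (ℓ - k) / Real.log ((max (ℓ - k) 2 : ℕ) : ℝ) := by
    intro k
    rw [hSeq_eq, bSeq_eq, mul_div_assoc]
  have htnn : ∀ k ∈ Finset.range (ℓ + 1),
      0 ≤ bSeq ν k * bSeq (1/2) (ℓ - k) / Real.log ((max (ℓ - k) 2 : ℕ) : ℝ) := fun k _ =>
    div_nonneg (mul_nonneg (bSeq_nonneg hν k) (bSeq_pos (by norm_num) _).le) (log_max_pos _).le
  have hsum_rw : ∑ k ∈ Finset.range (ℓ + 1), (-1 : ℝ) ^ k * genBinom (-ν) k * hSeq (ℓ - k)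
      = ∑ k ∈ Finset.range (ℓ + 1),
          bSeq ν k * bSeq (1/2) (ℓ - k) / Real.log ((max (ℓ - k) 2 : ℕ) : ℝ) :=
    Finset.sum_congr rfl fun k _ => hterm k
  have hSnn : 0 ≤ ∑ k ∈ Finset.range (ℓ + 1), (-1 : ℝ) ^ k * genBinom (-ν) k * hSeq (ℓ - k) := by
    rw [hsum_rw]; exact Finset.sum_nonneg htnn
  rw [abs_of_nonneg hSnn, hsum_rw]
  have hvdm : ∑ k ∈ Finset.range (ℓ + 1), bSeq ν k * bSeq (1/2) (ℓ - k) = bSeq (ν + 1/2) ℓ :=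
    bSeq_vandermonde ν (1/2) ℓ
  have hLpos := log_max_pos ℓ
  -- upper bound
  have hupper : ∑ k ∈ Finset.range (ℓ + 1),
      bSeq ν k * bSeq (1/2) (ℓ - k) / Real.log ((max (ℓ - k) 2 : ℕ) : ℝ)
      ≤ bSeq (ν + 1/2) ℓ / Real.log 2 := by
    rw [← hvdm, Finset.sum_div]
    refine Finset.sum_le_sum fun k _ => ?_
    exact div_le_div_of_nonneg_left
      (mul_nonneg (bSeq_nonneg hν k) (bSeq_pos (by norm_num) _).le) hlog2
      (log_two_le_log_max _) |>.trans_eq rfl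
  -- lower bound
  have hlower : bSeq (ν + 1/2) ℓ / Real.log ((max ℓ 2 : ℕ) : ℝ)
      ≤ ∑ k ∈ Finset.range (ℓ + 1),
          bSeq ν k * bSeq (1/2) (ℓ - k) / Real.log ((max (ℓ - k) 2 : ℕ) : ℝ) := by
    rw [← hvdm, Finset.sum_div]
    refine Finset.sum_le_sum fun k _ => ?_
    apply div_le_div_of_nonneg_left
      (mul_nonneg (bSeq_nonneg hν k) (bSeq_pos (by norm_num) _).le) (log_max_pos _)
    apply Real.log_le_log (by positivity)
    have : max (ℓ - k) 2 ≤ max ℓ 2 := max_le_max (Nat.sub_le ℓ k) le_rfl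
    exact_mod_cast this
  rcases Nat.eq_zero_or_pos ℓ with h0 | h1
  · subst h0
    have hmax1 : ((max 0 1 : ℕ) : ℝ) = 1 := by norm_num
    have hmax2 : ((max 0 2 : ℕ) : ℝ) = 2 := by norm_num
    have hb0 : bSeq (ν + 1/2) 0 = 1 := bSeq_zero _
    have hSval : ∑ k ∈ Finset.range (0 + 1),
        bSeq ν k * bSeq (1/2) (0 - k) / Real.log ((max (0 - k) 2 : ℕ) : ℝ) = 1 / Real.log 2 := by
      simp [bSeq_zero]
    rw [hSval, hmax1, hmax2, Real.one_rpow]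
    constructor
    · rw [mul_one]
      apply div_le_div_of_nonneg_right ?_ hlog2.le
      · exact Real.exp_le_one_iff.mpr (by linarith)
    · rw [mul_one]
      apply div_le_div_of_nonneg_right ?_ hlog2.le
      · exact Real.one_le_exp hK0
  · have hmaxℓ1 : ((max ℓ 1 : ℕ) : ℝ) = (ℓ : ℝ) := by
      rw [max_eq_left h1]
    have hasymp := bSeq_asymp hμ ℓ h1
    have he : ν + 1/2 - 1 = ν - 1/2 := by ring
    rw [hmaxℓ1]
    constructor
    · calc Real.exp (-K) * (ℓ:ℝ) ^ (ν - 1/2) / Real.log ((max ℓ 2 : ℕ) : ℝ)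
          ≤ bSeq (ν + 1/2) ℓ / Real.log ((max ℓ 2 : ℕ) : ℝ) := by
            apply div_le_div_of_nonneg_right ?_ hLpos.le
            · rw [← he]; exact hasymp.1
        _ ≤ _ := hlower
    · calc ∑ k ∈ Finset.range (ℓ + 1),
            bSeq ν k * bSeq (1/2) (ℓ - k) / Real.log ((max (ℓ - k) 2 : ℕ) : ℝ)
          ≤ bSeq (ν + 1/2) ℓ / Real.log 2 := hupper
        _ ≤ (Real.exp K * (ℓ:ℝ) ^ (ν - 1/2)) / Real.log 2 := by
            apply div_le_div_of_nonneg_right ?_ hlog2.le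
            · rw [← he]; exact hasymp.2
        _ = Real.exp K / Real.log 2 * (ℓ:ℝ) ^ (ν - 1/2) := by ring

/-- (i) `∑ h_ℓ² < ∞`, and (ii) for every `ν ≥ 0` the coefficients
`c_ℓ = ∑_{k≤ℓ} (−1)^k binom(−ν,k) h_{ℓ−k}` of the product of `(1−z)^{−ν}` with `∑ h_m z^m`
satisfy `A (max(ℓ,1))^{ν−1/2} / log(max(ℓ,2)) ≤ |c_ℓ| ≤ B (max(ℓ,1))^{ν−1/2}`. -/
theorem hSeq_summable_and_product_bounds :
    Summable (fun ℓ : ℕ => (hSeq ℓ) ^ 2) ∧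
    ∀ ν : ℝ, 0 ≤ ν → ∃ A B : ℝ, 0 < A ∧ 0 < B ∧ ∀ ℓ : ℕ,
      A * ((max ℓ 1 : ℕ) : ℝ) ^ (ν - 1 / 2) / Real.log ((max ℓ 2 : ℕ) : ℝ)
          ≤ |∑ k ∈ Finset.range (ℓ + 1), (-1 : ℝ) ^ k * genBinom (-ν) k * hSeq (ℓ - k)| ∧
      |∑ k ∈ Finset.range (ℓ + 1), (-1 : ℝ) ^ k * genBinom (-ν) k * hSeq (ℓ - k)|
          ≤ B * ((max ℓ 1 : ℕ) : ℝ) ^ (ν - 1 / 2) := by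
  exact ⟨part_one, part_two⟩
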